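/- Let X be a real Banach space and t > 0. Then A_t^B(X) ≥ √2 · min{1, t}, where A_t^B(X) = sup{(‖x + t·y‖ + ‖t·x − y‖)/2 : x, y unit vectors with x Birkhoff-orthogonal to y}. -/
import Mathlib

section Aux

variable {X : Type*} [NormedAddCommGroup X] [NormedSpace ℝ X]

private def Tm (x y : X) (p : ℝ × ℝ) : X := p.1 • x + p.2 • y

private def Dm (p q : ℝ × ℝ) : ℝ := p.1 * q.2 - p.2 * q.1

private lemma Tm_smul (x y : X) (c : ℝ) (p : ℝ × ℝ) :
    Tm x y (c • p) = c • Tm x y p := by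
  simp [Tm, smul_add, smul_smul]

private lemma Tm_add (x y : X) (p q : ℝ × ℝ) :
    Tm x y (p + q) = Tm x y p + Tm x y q := by
  simp only [Tm, Prod.fst_add, Prod.snd_add, add_smul]
  abel

private lemma Tm_cont (x y : X) : Continuous (Tm x y) := by
  unfold Tm; fun_prop

set_option maxHeartbeats 1000000 in
private lemma key (x y : X) (hx : ‖x‖ = 1) (hy : ‖y‖ = 1)
    (hxy : ∀ s : ℝ, ‖x + s • y‖ ≥ ‖x‖) :
    ∃ U V : X, ‖U‖ = 1 ∧ ‖V‖ = 1 ∧ (∀ s : ℝ, ‖U + s • V‖ ≥ 1) ∧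
      2 * Real.sqrt 2 ≤ ‖U + V‖ + ‖U - V‖ := by
  -- linear independence of x, y
  have hind : ∀ a b : ℝ, a • x + b • y = 0 → a = 0 ∧ b = 0 := by
    intro a b hab
    by_cases ha : a = 0
    · subst ha
      simp only [zero_smul, zero_add] at hab
      rcases smul_eq_zero.mp hab with h | h
      · exact ⟨rfl, h⟩
      · exfalso; rw [h, norm_zero] at hy; norm_num at hy
    · exfalso
      have h2 : x + (b / a) • y = 0 := by
        have h3 : (a⁻¹ : ℝ) • (a • x + b • y) = 0 := by rw [hab, smul_zero]
        rw [smul_add, smul_smul, smul_smul, inv_mul_cancel₀ ha, one_smul] at h3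
        rw [show b / a = a⁻¹ * b by ring]
        exact h3
      have h0 := hxy (b / a)
      rw [h2, norm_zero, hx] at h0
      linarith
  have hTzero : ∀ p : ℝ × ℝ, Tm x y p = 0 → p = 0 := by
    intro p hp
    obtain ⟨h1, h2⟩ := hind p.1 p.2 hp
    exact Prod.ext h1 h2
  have hNc : Continuous fun p : ℝ × ℝ => ‖Tm x y p‖ := (Tm_cont x y).norm
  have hT10 : Tm x y (1, 0) = x := by simp [Tm]
  have hT01 : Tm x y (0, 1) = y := by simp [Tm]
  have hNsmul : ∀ (c : ℝ) (p : ℝ × ℝ), ‖Tm x y (c • p)‖ = |c| * ‖Tm x y p‖ := by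
    intro c p
    rw [Tm_smul, norm_smul, Real.norm_eq_abs]
  -- positive lower bound via euclidean-type sphere
  have hsph : IsCompact (Metric.sphere (0 : ℝ × ℝ) 1) := isCompact_sphere 0 1
  have hsphne : (Metric.sphere (0 : ℝ × ℝ) 1).Nonempty := by
    refine ⟨(1, 0), ?_⟩
    rw [mem_sphere_zero_iff_norm, Prod.norm_def]
    simp
  obtain ⟨p₁, hp₁, hp₁min⟩ := hsph.exists_isMinOn hsphne hNc.continuousOn
  set c₁ := ‖Tm x y p₁‖ with hc₁
  have hp₁ne : p₁ ≠ 0 := by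
    intro h
    rw [h, mem_sphere_zero_iff_norm, norm_zero] at hp₁
    norm_num at hp₁
  have hc₁pos : 0 < c₁ := by
    rw [hc₁, norm_pos_iff]
    intro h
    exact hp₁ne (hTzero _ h)
  have hNlower : ∀ p : ℝ × ℝ, c₁ * ‖p‖ ≤ ‖Tm x y p‖ := by
    intro p
    rcases eq_or_ne p 0 with rfl | hp
    · simp [Tm]
    · have hnp : 0 < ‖p‖ := norm_pos_iff.mpr hp
      have hmem : ‖p‖⁻¹ • p ∈ Metric.sphere (0 : ℝ × ℝ) 1 := by
        rw [mem_sphere_zero_iff_norm, norm_smul, Real.norm_eq_abs, abs_inv,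
          abs_of_pos hnp, inv_mul_cancel₀ hnp.ne']
      have h1 := (isMinOn_iff.mp hp₁min) _ hmem
      rw [hNsmul, abs_inv, abs_of_pos hnp] at h1
      have h2 : (‖p‖⁻¹ * ‖Tm x y p‖) * ‖p‖ = ‖Tm x y p‖ := by field_simp
      have h3 : c₁ * ‖p‖ ≤ (‖p‖⁻¹ * ‖Tm x y p‖) * ‖p‖ :=
        mul_le_mul_of_nonneg_right h1 hnp.le
      rwa [h2] at h3
  set S : Set (ℝ × ℝ) := {p | ‖Tm x y p‖ = 1} with hSdef
  have h10S : (1, 0) ∈ S := by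
    show ‖Tm x y (1, 0)‖ = 1
    rw [hT10, hx]
  have h01S : (0, 1) ∈ S := by
    show ‖Tm x y (0, 1)‖ = 1
    rw [hT01, hy]
  have hSc : IsCompact S := by
    refine (isCompact_closedBall (0 : ℝ × ℝ) c₁⁻¹).of_isClosed_subset
      (isClosed_eq hNc continuous_const) ?_
    intro p hp
    have hp' : ‖Tm x y p‖ = 1 := hp
    rw [Metric.mem_closedBall, dist_zero_right]
    have h1 := hNlower p
    rw [hp'] at h1
    nlinarith [mul_inv_cancel₀ hc₁pos.ne', norm_nonneg p]
  -- maximize |Dm| over S × S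
  have hprodc : IsCompact (S ×ˢ S) := hSc.prod hSc
  have hprodne : (S ×ˢ S).Nonempty := ⟨((1, 0), (0, 1)), Set.mk_mem_prod h10S h01S⟩
  have hDc : Continuous fun r : (ℝ × ℝ) × (ℝ × ℝ) => |Dm r.1 r.2| := by
    unfold Dm; fun_prop
  obtain ⟨⟨z, v⟩, hzv, hmax'⟩ := hprodc.exists_isMaxOn hprodne hDc.continuousOn
  set m := |Dm z v| with hmdef
  have hzS : z ∈ S := hzv.1
  have hvS : v ∈ S := hzv.2
  have hmub : ∀ p q, p ∈ S → q ∈ S → |Dm p q| ≤ m := by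
    intro p q hp hq
    exact (isMaxOn_iff.mp hmax') (p, q) (Set.mk_mem_prod hp hq)
  have hm1 : (1 : ℝ) ≤ m := by
    have h1 := hmub (1, 0) (0, 1) h10S h01S
    simpa [Dm] using h1
  have hmpos : 0 < m := lt_of_lt_of_le one_pos hm1
  have hZ1 : ‖Tm x y z‖ = 1 := hzS
  have hV1 : ‖Tm x y v‖ = 1 := hvS
  -- minimize along the line
  have hhc : Continuous fun s : ℝ => ‖Tm x y z + s • Tm x y v‖ := by fun_prop
  obtain ⟨s₀, hs₀mem, hs₀min⟩ := (isCompact_Icc (a := (-3 : ℝ)) (b := 3)).exists_isMinOn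
    ⟨0, by norm_num⟩ hhc.continuousOn
  set g := ‖Tm x y z + s₀ • Tm x y v‖ with hgdef
  have hg_le1 : g ≤ 1 := by
    have h1 := (isMinOn_iff.mp hs₀min) 0 (by norm_num)
    simpa [hZ1] using h1
  have hglob : ∀ s : ℝ, g ≤ ‖Tm x y z + s • Tm x y v‖ := by
    intro s
    by_cases hsmem : s ∈ Set.Icc (-3 : ℝ) 3
    · exact (isMinOn_iff.mp hs₀min) s hsmem
    · have habs : 3 < |s| := by
        rw [Set.mem_Icc, not_and_or] at hsmem
        rcases hsmem with h | h
        · push_neg at h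
          have : 3 < -s := by linarith
          exact this.trans_le (neg_le_abs s)
        · push_neg at h
          exact h.trans_le (le_abs_self s)
      have h4 : ‖s • Tm x y v‖ ≤ ‖Tm x y z + s • Tm x y v‖ + ‖Tm x y z‖ := by
        have he := norm_sub_le (Tm x y z + s • Tm x y v) (Tm x y z)
        rwa [add_sub_cancel_left] at he
      rw [norm_smul, Real.norm_eq_abs, hV1, mul_one, hZ1] at h4
      linarith
  have hgpos : 0 < g := by
    rw [hgdef, norm_pos_iff]
    intro h0
    have h1 : Tm x y (z + s₀ • v) = 0 := by
      rw [Tm_add, Tm_smul]; exact h0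
    have h2 := hTzero _ h1
    have h3 : z = -(s₀ • v) := by
      rw [add_eq_zero_iff_eq_neg] at h2; exact h2
    have h4 : Dm z v = 0 := by
      rw [h3]
      simp only [Dm, Prod.fst_neg, Prod.snd_neg, Prod.smul_fst, Prod.smul_snd, smul_eq_mul]
      ring
    rw [hmdef, h4, abs_zero] at hmpos
    exact lt_irrefl 0 hmpos
  -- the orthogonal unit vector u (coordinates)
  set u : ℝ × ℝ := g⁻¹ • (z + s₀ • v) with hudef
  have hTu : Tm x y u = g⁻¹ • (Tm x y z + s₀ • Tm x y v) := by
    rw [hudef, Tm_smul, Tm_add, Tm_smul]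
  have huS : u ∈ S := by
    show ‖Tm x y u‖ = 1
    rw [hTu, norm_smul, Real.norm_eq_abs, abs_inv, abs_of_pos hgpos, ← hgdef]
    exact inv_mul_cancel₀ hgpos.ne'
  have hDuv : |Dm u v| = g⁻¹ * m := by
    have h6 : Dm u v = g⁻¹ * Dm z v := by
      simp only [hudef, Dm, Prod.smul_fst, Prod.smul_snd, Prod.fst_add, Prod.snd_add,
        smul_eq_mul]
      ring
    rw [h6, abs_mul, abs_inv, abs_of_pos hgpos, hmdef]
  -- a and b
  set a := ‖Tm x y u + Tm x y v‖ with hadef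
  set b := ‖Tm x y u - Tm x y v‖ with hbdef
  have hTsum : Tm x y (u + v) = Tm x y u + Tm x y v := Tm_add x y u v
  have hTdiff : Tm x y (u - v) = Tm x y u - Tm x y v := by
    rw [eq_sub_iff_add_eq, ← Tm_add, sub_add_cancel]
  have hgim : 0 < g⁻¹ * m := mul_pos (inv_pos.mpr hgpos) hmpos
  have hapos : 0 < a := by
    rw [hadef, norm_pos_iff]
    intro h0
    have h1 : Tm x y (u + v) = 0 := by rw [hTsum, h0]
    have h2 := hTzero _ h1
    have h3 : u = -v := by rw [add_eq_zero_iff_eq_neg] at h2; exact h2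
    have h4 : Dm u v = 0 := by
      rw [h3]
      simp only [Dm, Prod.fst_neg, Prod.snd_neg]
      ring
    rw [h4, abs_zero] at hDuv
    linarith
  have hbpos : 0 < b := by
    rw [hbdef, norm_pos_iff]
    intro h0
    have h1 : Tm x y (u - v) = 0 := by rw [hTdiff, h0]
    have h2 := hTzero _ h1
    have h3 : u = v := by rwa [sub_eq_zero] at h2
    have h4 : Dm u v = 0 := by rw [h3]; simp only [Dm]; ring
    rw [h4, abs_zero] at hDuv
    linarith
  have hpS : a⁻¹ • (u + v) ∈ S := by
    show ‖Tm x y (a⁻¹ • (u + v))‖ = 1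
    rw [Tm_smul, hTsum, norm_smul, Real.norm_eq_abs, abs_inv, abs_of_pos hapos, ← hadef]
    exact inv_mul_cancel₀ hapos.ne'
  have hqS : b⁻¹ • (u - v) ∈ S := by
    show ‖Tm x y (b⁻¹ • (u - v))‖ = 1
    rw [Tm_smul, hTdiff, norm_smul, Real.norm_eq_abs, abs_inv, abs_of_pos hbpos, ← hbdef]
    exact inv_mul_cancel₀ hbpos.ne'
  have hDpq : |Dm (a⁻¹ • (u + v)) (b⁻¹ • (u - v))| = a⁻¹ * b⁻¹ * 2 * |Dm u v| := by
    have h1 : Dm (a⁻¹ • (u + v)) (b⁻¹ • (u - v)) = (a⁻¹ * b⁻¹ * (-2)) * Dm u v := by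
      simp only [Dm, Prod.smul_fst, Prod.smul_snd, Prod.fst_add, Prod.snd_add,
        Prod.fst_sub, Prod.snd_sub, smul_eq_mul]
      ring
    rw [h1, abs_mul]
    have h2 : |a⁻¹ * b⁻¹ * (-2)| = a⁻¹ * b⁻¹ * 2 := by
      rw [abs_mul, abs_mul, abs_inv, abs_inv, abs_of_pos hapos, abs_of_pos hbpos]
      norm_num
    rw [h2]
  have hab2 : (2 : ℝ) ≤ a * b := by
    have hineq := hmub _ _ hpS hqS
    rw [hDpq, hDuv] at hineq
    -- a⁻¹ * b⁻¹ * 2 * (g⁻¹ * m) ≤ m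
    have e1 : a⁻¹ * b⁻¹ * 2 * (g⁻¹ * m) * (a * b * g) = 2 * m := by
      field_simp
    have e2 : a⁻¹ * b⁻¹ * 2 * (g⁻¹ * m) * (a * b * g) ≤ m * (a * b * g) :=
      mul_le_mul_of_nonneg_right hineq (by positivity)
    rw [e1] at e2
    have e3 : m * (a * b * g) ≤ m * (a * b) := by
      apply mul_le_mul_of_nonneg_left _ hmpos.le
      nlinarith [mul_nonneg (mul_pos hapos hbpos).le (sub_nonneg.mpr hg_le1)]
    nlinarith [e2.trans e3, hmpos]
  -- conclude
  refine ⟨Tm x y u, Tm x y v, huS, hV1, ?_, ?_⟩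
  · intro s
    have he : Tm x y u + s • Tm x y v
        = g⁻¹ • (Tm x y z + (s₀ + g * s) • Tm x y v) := by
      rw [hTu]
      conv_rhs => rw [add_smul, ← add_assoc, smul_add, smul_smul,
        inv_mul_cancel_left₀ hgpos.ne']
    have h2 := hglob (s₀ + g * s)
    have h3 : (1 : ℝ) ≤ g⁻¹ * ‖Tm x y z + (s₀ + g * s) • Tm x y v‖ := by
      rw [← inv_mul_cancel₀ hgpos.ne']
      exact mul_le_mul_of_nonneg_left h2 (inv_pos.mpr hgpos).le
    rw [ge_iff_le, he, norm_smul, Real.norm_eq_abs, abs_inv, abs_of_pos hgpos]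
    exact h3
  · have h8 : 8 ≤ (a + b) ^ 2 := by nlinarith [hab2, sq_nonneg (a - b)]
    have hs8 : Real.sqrt 8 = 2 * Real.sqrt 2 := by
      rw [show (8 : ℝ) = 2 ^ 2 * 2 by norm_num, Real.sqrt_mul (by positivity),
        Real.sqrt_sq (by norm_num)]
    calc 2 * Real.sqrt 2 = Real.sqrt 8 := hs8.symm
      _ ≤ Real.sqrt ((a + b) ^ 2) := Real.sqrt_le_sqrt h8
      _ = a + b := Real.sqrt_sq (by positivity)

end Aux

set_option maxHeartbeats 1000000 in
theorem stmt_5 {X : Type*} [NormedAddCommGroup X] [NormedSpace ℝ X] [CompleteSpace X]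
    (t : ℝ) (ht : 0 < t)
    (hex : ∃ x y : X, ‖x‖ = 1 ∧ ‖y‖ = 1 ∧ ∀ s : ℝ, ‖x + s • y‖ ≥ ‖x‖) :
    Real.sqrt 2 * min 1 t ≤
    sSup {r : ℝ | ∃ x y : X, ‖x‖ = 1 ∧ ‖y‖ = 1 ∧ (∀ s : ℝ, ‖x + s • y‖ ≥ ‖x‖) ∧
      r = (‖x + t • y‖ + ‖t • x - y‖) / 2} := by
  obtain ⟨x₀, y₀, hx₀, hy₀, hxy₀⟩ := hex
  obtain ⟨U, V, hU, hV, horth, hsum⟩ := key x₀ y₀ hx₀ hy₀ hxy₀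
  set Sset : Set ℝ := {r : ℝ | ∃ x y : X, ‖x‖ = 1 ∧ ‖y‖ = 1 ∧ (∀ s : ℝ, ‖x + s • y‖ ≥ ‖x‖) ∧
      r = (‖x + t • y‖ + ‖t • x - y‖) / 2} with hSset
  have hbdd : BddAbove Sset := by
    refine ⟨1 + t, ?_⟩
    rintro r ⟨x, y, hx, hy, -, rfl⟩
    have h1 : ‖x + t • y‖ ≤ 1 + t := by
      calc ‖x + t • y‖ ≤ ‖x‖ + ‖t • y‖ := norm_add_le _ _
        _ = 1 + t := by rw [hx, norm_smul, Real.norm_eq_abs, abs_of_pos ht, hy, mul_one]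
    have h2 : ‖t • x - y‖ ≤ t + 1 := by
      calc ‖t • x - y‖ ≤ ‖t • x‖ + ‖y‖ := norm_sub_le _ _
        _ = t + 1 := by rw [hy, norm_smul, Real.norm_eq_abs, abs_of_pos ht, hx, mul_one]
    linarith
  have hmem : (‖U + t • V‖ + ‖t • U - V‖) / 2 ∈ Sset := by
    refine ⟨U, V, hU, hV, ?_, rfl⟩
    intro s
    rw [hU]
    exact horth s
  have hle := le_csSup hbdd hmem
  refine le_trans ?_ hle
  -- now the convexity estimates
  set A := ‖U + t • V‖ with hA
  set B := ‖t • U - V‖ with hB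
  have hs2 : Real.sqrt 2 * Real.sqrt 2 = 2 := Real.mul_self_sqrt (by norm_num)
  have hs1 : (1 : ℝ) ≤ Real.sqrt 2 := by
    nlinarith [Real.sqrt_nonneg 2, hs2]
  rcases le_total 1 t with htc | htc
  · -- t ≥ 1 : min 1 t = 1
    rw [min_eq_left htc]
    -- t • (U+V) = (U + t•V) + (t-1) • U
    have k1 : t * ‖U + V‖ ≤ A + (t - 1) := by
      have he : t • (U + V) = (U + t • V) + (t - 1) • U := by module
      have h1 : ‖t • (U + V)‖ ≤ ‖U + t • V‖ + ‖(t - 1) • U‖ := by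
        rw [he]; exact norm_add_le _ _
      rw [norm_smul, Real.norm_eq_abs, abs_of_pos ht] at h1
      rw [norm_smul, Real.norm_eq_abs, abs_of_nonneg (by linarith : (0:ℝ) ≤ t - 1), hU,
        mul_one] at h1
      exact h1
    have k2 : t * ‖U - V‖ ≤ B + (t - 1) := by
      have he : t • (U - V) = (t • U - V) + (t - 1) • (-V) := by module
      have h1 : ‖t • (U - V)‖ ≤ ‖t • U - V‖ + ‖(t - 1) • (-V)‖ := by
        rw [he]; exact norm_add_le _ _
      rw [norm_smul, Real.norm_eq_abs, abs_of_pos ht] at h1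
      rw [norm_smul, Real.norm_eq_abs, abs_of_nonneg (by linarith : (0:ℝ) ≤ t - 1),
        norm_neg, hV, mul_one] at h1
      exact h1
    -- 2√2 ≤ ‖U+V‖+‖U−V‖ and t(‖U+V‖+‖U−V‖) ≤ A+B+2(t−1)
    have h3 : t * (2 * Real.sqrt 2) ≤ A + B + 2 * (t - 1) := by
      have := mul_le_mul_of_nonneg_left hsum ht.le
      nlinarith [k1, k2]
    nlinarith [h3, hs1, htc]
  · -- t ≤ 1 : min 1 t = t
    rw [min_eq_right htc]
    set s := Real.sqrt 2 with hsd
    -- (s+1-t) • (U+V) = s • (U+t•V) + (1-t) • (U+(1+s)•V)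
    have hst : 0 < s + 1 - t := by nlinarith [hs1]
    have k1 : (s + 1 - t) * ‖U + V‖ ≤ s * A + (1 - t) * ‖U + (1 + s) • V‖ := by
      have he : (s + 1 - t) • (U + V) = s • (U + t • V) + (1 - t) • (U + (1 + s) • V) := by
        module
      have h1 : ‖(s + 1 - t) • (U + V)‖ ≤ ‖s • (U + t • V)‖ + ‖(1 - t) • (U + (1 + s) • V)‖ := by
        rw [he]; exact norm_add_le _ _
      rw [norm_smul, norm_smul, norm_smul, Real.norm_eq_abs, Real.norm_eq_abs,
        Real.norm_eq_abs, abs_of_pos hst, abs_of_nonneg (by nlinarith [hs1] : (0:ℝ) ≤ s),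
        abs_of_nonneg (by linarith : (0:ℝ) ≤ 1 - t)] at h1
      exact h1
    have k2 : (s + 1 - t) * ‖U - V‖ ≤ s * B + (1 - t) * ‖(1 + s) • U - V‖ := by
      have he : (s + 1 - t) • (U - V) = s • (t • U - V) + (1 - t) • ((1 + s) • U - V) := by
        module
      have h1 : ‖(s + 1 - t) • (U - V)‖ ≤ ‖s • (t • U - V)‖ + ‖(1 - t) • ((1 + s) • U - V)‖ := by
        rw [he]; exact norm_add_le _ _
      rw [norm_smul, norm_smul, norm_smul, Real.norm_eq_abs, Real.norm_eq_abs,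
        Real.norm_eq_abs, abs_of_pos hst, abs_of_nonneg (by nlinarith [hs1] : (0:ℝ) ≤ s),
        abs_of_nonneg (by linarith : (0:ℝ) ≤ 1 - t)] at h1
      exact h1
    have m1 : ‖U + (1 + s) • V‖ ≤ 2 + s := by
      calc ‖U + (1 + s) • V‖ ≤ ‖U‖ + ‖(1 + s) • V‖ := norm_add_le _ _
        _ = 2 + s := by
          rw [hU, norm_smul, Real.norm_eq_abs, abs_of_nonneg (by nlinarith [hs1] : (0:ℝ) ≤ 1 + s),
            hV, mul_one]
          ring
    have m2 : ‖(1 + s) • U - V‖ ≤ 2 + s := by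
      calc ‖(1 + s) • U - V‖ ≤ ‖(1 + s) • U‖ + ‖V‖ := norm_sub_le _ _
        _ = 2 + s := by
          rw [hV, norm_smul, Real.norm_eq_abs, abs_of_nonneg (by nlinarith [hs1] : (0:ℝ) ≤ 1 + s),
            hU, mul_one]
          ring
    -- combine
    have hcomb : (s + 1 - t) * (2 * s) ≤ s * (A + B) + (1 - t) * (2 * (2 + s)) := by
      have h1 := mul_le_mul_of_nonneg_left hsum hst.le
      nlinarith [k1, k2, m1, m2, hst, htc]
    -- derive s * t ≤ (A+B)/2, i.e. goal
    have hfin : 2 * (s * t) ≤ A + B := by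
      nlinarith [hcomb, hs2, hs1, ht]
    linarith
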